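/- Let p be an odd prime, m a positive integer, and α ∈ F_p with α ≠ 0. The map a ↦ c(a) from F_{p^m} to functions D(α) → F_p is injective; consequently the linear code C_{D(α)} = {c(a) : a ∈ F_{p^m}} has exactly p^m codewords (dimension m over F_p). -/

import Mathlib

/-- Let `p` be an odd prime, `m` a positive integer, and `α ∈ F_p` nonzero. The map
`a ↦ c(a)` from `F_{p^m}` to functions `D(α) → F_p` is injective; consequently the linear
code `C_{D(α)}` has exactly `p^m` codewords. -/
theorem code_CDalpha_injective
    (p : ℕ) [Fact p.Prime] (hp2 : p ≠ 2) (m : ℕ) (hm0 : 0 < m)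
    (F : Type*) [Field F] [Fintype F] [DecidableEq F] [Algebra (ZMod p) F]
    (hcard : Fintype.card F = p ^ m) (α : ZMod p) (hα : α ≠ 0) :
    Function.Injective (fun a : F =>
      fun d : {d : F // d ≠ 0 ∧ Algebra.trace (ZMod p) F d = α} =>
        Algebra.trace (ZMod p) F (a * d.1)) ∧
    (Set.range (fun a : F =>
      fun d : {d : F // d ≠ 0 ∧ Algebra.trace (ZMod p) F d = α} =>
        Algebra.trace (ZMod p) F (a * d.1))).ncard = p ^ m := by
  have key : ∀ c : F,
      (∀ d : F, d ≠ 0 → Algebra.trace (ZMod p) F d = α →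
        Algebra.trace (ZMod p) F (c * d) = 0) → c = 0 := by
    intro c hc
    -- there is an element of nonzero trace
    have h1 : ∃ x : F, Algebra.trace (ZMod p) F x ≠ 0 := by
      by_contra h
      push_neg at h
      have := (traceForm_nondegenerate (ZMod p) F).1 1
        (fun n => by simpa [Algebra.traceForm_apply] using h n)
      exact one_ne_zero this
    obtain ⟨x, hx⟩ := h1
    set d0 : F := (α / Algebra.trace (ZMod p) F x) • x with hd0def
    have htrd0 : Algebra.trace (ZMod p) F d0 = α := by
      rw [hd0def, map_smul, smul_eq_mul, div_mul_cancel₀ _ hx]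
    have hd0ne : d0 ≠ 0 := by
      intro h
      rw [h, map_zero] at htrd0
      exact hα htrd0.symm
    have hct : ∀ t : F, Algebra.trace (ZMod p) F t = 0 →
        Algebra.trace (ZMod p) F (c * t) = 0 := by
      intro t ht
      have htr : Algebra.trace (ZMod p) F (d0 + t) = α := by
        rw [map_add, htrd0, ht, add_zero]
      have hne : d0 + t ≠ 0 := by
        intro h
        rw [h, map_zero] at htr
        exact hα htr.symm
      have h2 := hc (d0 + t) hne htr
      have h3 := hc d0 hd0ne htrd0
      rw [mul_add, map_add, h3, zero_add] at h2
      exact h2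
    have hall : ∀ y : F, Algebra.trace (ZMod p) F (c * y) = 0 := by
      intro y
      have ht : Algebra.trace (ZMod p) F
          (y - (Algebra.trace (ZMod p) F y / α) • d0) = 0 := by
        rw [map_sub, map_smul, htrd0, smul_eq_mul, div_mul_cancel₀ _ hα, sub_self]
      have h4 := hct _ ht
      rw [mul_sub, map_sub, sub_eq_zero] at h4
      rw [show c * y = c * y from rfl, h4, mul_smul_comm, map_smul,
        hc d0 hd0ne htrd0, smul_zero]
    exact (traceForm_nondegenerate (ZMod p) F).1 c
      (fun n => by simpa [Algebra.traceForm_apply] using hall n)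
  have hinj : Function.Injective (fun a : F =>
      fun d : {d : F // d ≠ 0 ∧ Algebra.trace (ZMod p) F d = α} =>
        Algebra.trace (ZMod p) F (a * d.1)) := by
    intro a b h
    have := key (a - b) (fun d hd htr => by
      have := congrFun h ⟨d, hd, htr⟩
      simp only at this
      rw [sub_mul, map_sub, this, sub_self])
    exact sub_eq_zero.mp this
  refine ⟨hinj, ?_⟩
  calc (Set.range _).ncard = Nat.card (Set.range (fun a : F =>
      fun d : {d : F // d ≠ 0 ∧ Algebra.trace (ZMod p) F d = α} =>
        Algebra.trace (ZMod p) F (a * d.1))) := (Nat.card_coe_set_eq _).symm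
    _ = Nat.card F := Nat.card_range_of_injective hinj
    _ = p ^ m := by rw [Nat.card_eq_fintype_card, hcard]
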